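/- arXiv:1410.7469 — 2 statements merged into one kernel-verified Lean document; each statement's English description precedes it below -/
import Mathlib

section
/- In a finite Markov chain, for a state s and sets Sat1, Sat2 ⊆ S: Pr_s(∃ h. X_h ∈ Sat2 ∧ ∀ i < h. X_i ∈ Sat1) = 0 if and only if there is no finite path s = s_0, s_1, …, s_n with positive transition probabilities at each step such that s_n ∈ Sat2 and s_i ∈ Sat1 for all i < n. -/
open MeasureTheory Filter
open scoped ENNReal Classical

/-- Qualitative characterisation of probability-zero unbounded until in a finite Markov
chain: `Pr_s(∃ h, X_h ∈ Sat2 ∧ ∀ i < h, X_i ∈ Sat1) = 0` iff there is no finite path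
`s = s_0, s_1, …, s_n` of positive-probability transitions with `s_n ∈ Sat2` and
`s_i ∈ Sat1` for all `i < n`. -/
theorem stmt9 {S : Type*} [Fintype S] [MeasurableSpace S] [MeasurableSingletonClass S]
    (P : S → S → ℝ≥0∞) (hrow : ∀ s, ∑' s', P s s' = 1)
    (μ : S → Measure (ℕ → S))
    (hprob : ∀ s, IsProbabilityMeasure (μ s))
    (hcyl : ∀ (s : S) (n : ℕ) (w : ℕ → S),
      μ s {σ | ∀ i ≤ n, σ i = w i} =
        (if w 0 = s then 1 else 0) * ∏ i ∈ Finset.range n, P (w i) (w (i + 1)))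
    (Sat1 Sat2 : Set S) (s : S) :
    μ s {σ | ∃ h, σ h ∈ Sat2 ∧ ∀ i < h, σ i ∈ Sat1} = 0 ↔
      ¬ ∃ (n : ℕ) (w : ℕ → S), w 0 = s ∧ (∀ i < n, P (w i) (w (i + 1)) ≠ 0) ∧
          w n ∈ Sat2 ∧ ∀ i < n, w i ∈ Sat1 := by
  constructor
  · intro hzero
    rintro ⟨n, w, hw0, hpos, hw2, hw1⟩
    have hsub : {σ : ℕ → S | ∀ i ≤ n, σ i = w i} ⊆
        {σ | ∃ h, σ h ∈ Sat2 ∧ ∀ i < h, σ i ∈ Sat1} := by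
      intro σ hσ
      exact ⟨n, by rw [hσ n le_rfl]; exact hw2,
        fun i hi => by rw [hσ i hi.le]; exact hw1 i hi⟩
    have h0 := measure_mono_null hsub hzero
    rw [hcyl, hw0, if_pos rfl, one_mul] at h0
    exact Finset.prod_ne_zero_iff.mpr
      (fun i hi => hpos i (Finset.mem_range.mp hi)) h0
  · intro hno
    apply measure_mono_null (t := ⋃ (h : ℕ), ⋃ (v : Fin (h+1) → S),
      {σ : ℕ → S | (v ⟨h, Nat.lt_succ_self h⟩ ∈ Sat2 ∧
          ∀ i, ∀ hi : i < h, v ⟨i, hi.trans (Nat.lt_succ_self h)⟩ ∈ Sat1) ∧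
        ∀ i ≤ h, σ i = v ⟨min i h, Nat.lt_succ_of_le (min_le_right i h)⟩})
    · rintro σ ⟨h, hσ2, hσ1⟩
      refine Set.mem_iUnion.mpr ⟨h, Set.mem_iUnion.mpr
        ⟨fun i => σ i, ⟨⟨hσ2, fun i hi => hσ1 i hi⟩, fun i hi => ?_⟩⟩⟩
      simp [min_eq_left hi]
    · refine measure_iUnion_null fun h => measure_iUnion_null fun v => ?_
      by_cases hp : v ⟨h, Nat.lt_succ_self h⟩ ∈ Sat2 ∧
          ∀ i, ∀ hi : i < h, v ⟨i, hi.trans (Nat.lt_succ_self h)⟩ ∈ Sat1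
      · set w : ℕ → S := fun i => v ⟨min i h, Nat.lt_succ_of_le (min_le_right i h)⟩ with hw
        refine measure_mono_null (t := {σ : ℕ → S | ∀ i ≤ h, σ i = w i})
          (fun σ hσ => hσ.2) ?_
        rw [hcyl]
        by_cases h0 : w 0 = s
        · rw [if_pos h0, one_mul]
          have hwh : w h ∈ Sat2 := by
            have : w h = v ⟨h, Nat.lt_succ_self h⟩ := by simp [hw, min_self]
            rw [this]; exact hp.1
          have hwi : ∀ i < h, w i ∈ Sat1 := by
            intro i hi
            have : w i = v ⟨i, hi.trans (Nat.lt_succ_self h)⟩ := by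
              simp [hw, min_eq_left hi.le]
            rw [this]; exact hp.2 i hi
          by_contra hne
          push_neg at hne
          have hpos : ∀ i < h, P (w i) (w (i+1)) ≠ 0 := by
            intro i hi
            intro hz
            exact hne (Finset.prod_eq_zero (Finset.mem_range.mpr hi) hz)
          exact hno ⟨h, w, h0, hpos, hwh, hwi⟩
        · rw [if_neg h0, zero_mul]
      · have : {σ : ℕ → S | (v ⟨h, Nat.lt_succ_self h⟩ ∈ Sat2 ∧
            ∀ i, ∀ hi : i < h, v ⟨i, hi.trans (Nat.lt_succ_self h)⟩ ∈ Sat1) ∧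
          ∀ i ≤ h, σ i = v ⟨min i h, Nat.lt_succ_of_le (min_le_right i h)⟩} = ∅ := by
          ext σ; simp only [Set.mem_setOf_eq, Set.mem_empty_iff_false, iff_false]
          exact fun hσ => hp hσ.1
        rw [this, measure_empty]
end

section
/- Let P be a finite stochastic matrix in absorbing block form [[I,0],[R,Q]] with Q^n → 0. Then for every transient state s and absorbing state y, the (s,y) entry of (I−Q)^{-1}R equals lim_{i→∞} (P^i)_{s,y}, and this limit equals the probability, starting in s, that the chain is eventually absorbed in y. -/
open Filter

section Aux

variable {T : Type*} [Fintype T] [DecidableEq T]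

section Normed
attribute [local instance] Matrix.linftyOpNormedRing Matrix.linftyOpNormedAlgebra

noncomputable local instance : CompleteSpace (Matrix T T ℝ) :=
  inferInstanceAs (CompleteSpace (T → T → ℝ))

lemma aux_summable_pow (Q : Matrix T T ℝ)
    (hQlim : Tendsto (fun n : ℕ => Q ^ n) atTop (nhds 0)) :
    Summable (fun n : ℕ => Q ^ n) := by
  have hnorm : Tendsto (fun n : ℕ => ‖Q ^ n‖) atTop (nhds 0) := by
    simpa using hQlim.norm
  obtain ⟨N, hNlt, hN1⟩ : ∃ N : ℕ, ‖Q ^ N‖ < 1 ∧ 1 ≤ N :=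
    ((hnorm.eventually (gt_mem_nhds one_pos)).and (eventually_ge_atTop 1)).exists
  haveI : NeZero N := ⟨by omega⟩
  set r : ℝ := ‖Q ^ N‖ with hr
  have hr0 : 0 ≤ r := norm_nonneg _
  set C : ℝ := ∑ j ∈ Finset.range N, ‖Q ^ j‖ with hC
  have hCj : ∀ j < N, ‖Q ^ j‖ ≤ C := fun j hj =>
    Finset.single_le_sum (f := fun j => ‖Q ^ j‖) (fun _ _ => norm_nonneg _)
      (Finset.mem_range.mpr hj)
  have hC0 : 0 ≤ C := Finset.sum_nonneg fun _ _ => norm_nonneg _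
  have hbound : ∀ n : ℕ, ‖Q ^ n‖ ≤ C * r ^ (n / N) := by
    intro n
    rcases Nat.eq_zero_or_pos (n / N) with h | h
    · rw [h, pow_zero, mul_one]
      exact hCj n ((Nat.div_eq_zero_iff.mp h).resolve_left (NeZero.ne N))
    · have key : Q ^ n = (Q ^ N) ^ (n / N) * Q ^ (n % N) := by
        rw [← pow_mul, ← pow_add, Nat.div_add_mod]
      calc ‖Q ^ n‖ ≤ ‖(Q ^ N) ^ (n / N)‖ * ‖Q ^ (n % N)‖ := key ▸ norm_mul_le _ _
        _ ≤ r ^ (n / N) * C :=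
          mul_le_mul (norm_pow_le' _ h) (hCj _ (Nat.mod_lt _ (Nat.pos_of_neZero N)))
            (norm_nonneg _) (by positivity)
        _ = C * r ^ (n / N) := mul_comm _ _
  have hgeom : Summable (fun n : ℕ => r ^ (n / N)) := by
    have h1 : Summable (fun p : ℕ × Fin N => r ^ p.1) := by
      rw [summable_prod_of_nonneg (by intro p; positivity)]
      refine ⟨fun x => Summable.of_finite, ?_⟩
      simp only [tsum_const, Fintype.card_fin, nsmul_eq_mul]
      exact (summable_geometric_of_lt_one hr0 hNlt).mul_left _
    have := (Nat.divModEquiv N).summable_iff.mpr h1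
    simpa [Function.comp_def, Nat.divModEquiv] using this
  have hsn : Summable (fun n : ℕ => ‖Q ^ n‖) :=
    Summable.of_nonneg_of_le (fun _ => norm_nonneg _) hbound (hgeom.mul_left C)
  exact hsn.of_norm

end Normed

lemma aux_blockpow {A : Type*} [Fintype A] [DecidableEq A]
    (R : Matrix T A ℝ) (Q : Matrix T T ℝ) (i : ℕ) :
    (Matrix.fromBlocks (1 : Matrix A A ℝ) 0 R Q) ^ i =
      Matrix.fromBlocks 1 0 ((∑ k ∈ Finset.range i, Q ^ k) * R) (Q ^ i) := by
  induction i with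
  | zero => simp [Matrix.fromBlocks_one]
  | succ n ih =>
    rw [pow_succ, ih, Matrix.fromBlocks_multiply]
    simp [Finset.sum_range_succ, Matrix.add_mul, pow_succ]

end Aux

/-- For a finite stochastic matrix in absorbing block form `P = [[I,0],[R,Q]]` with
`Q ^ n → 0`: for every transient state `s` and absorbing state `y`, the `(s,y)` entry of
`(I - Q)⁻¹ * R` is the limit of `(P ^ i) (s, y)` as `i → ∞`, and this limit equals the
probability of eventual absorption in `y` starting from `s`, i.e. `∑' i, (Q^i * R) s y`
(the sum over the first passage time). -/
theorem stmt17 {A T : Type*} [Fintype A] [Fintype T] [DecidableEq A] [DecidableEq T]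
    (R : Matrix T A ℝ) (Q : Matrix T T ℝ)
    (hRnonneg : ∀ t a, 0 ≤ R t a) (hQnonneg : ∀ t t', 0 ≤ Q t t')
    (hrow : ∀ t, ∑ a, R t a + ∑ t', Q t t' = 1)
    (hQlim : Tendsto (fun n : ℕ => Q ^ n) atTop (nhds 0)) :
    ∀ (s : T) (y : A),
      Tendsto (fun i : ℕ =>
          ((Matrix.fromBlocks (1 : Matrix A A ℝ) 0 R Q) ^ i) (Sum.inr s) (Sum.inl y))
        atTop (nhds (((1 - Q)⁻¹ * R) s y)) ∧
      ((1 - Q)⁻¹ * R) s y = ∑' i : ℕ, (Q ^ i * R) s y := by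
  intro s y
  have hS : Summable (fun k : ℕ => Q ^ k) := aux_summable_pow Q hQlim
  set S : Matrix T T ℝ := ∑' k : ℕ, Q ^ k with hSdef
  have hT : Tendsto (fun i : ℕ => ∑ k ∈ Finset.range i, Q ^ k) atTop (nhds S) :=
    hS.hasSum.tendsto_sum_nat
  -- S * (1 - Q) = 1
  have hmulcont : Continuous (fun M : Matrix T T ℝ => M * (1 - Q)) :=
    continuous_id.matrix_mul continuous_const
  have h1 : Tendsto (fun i : ℕ => (∑ k ∈ Finset.range i, Q ^ k) * (1 - Q)) atTop
      (nhds (S * (1 - Q))) := (hmulcont.tendsto S).comp hT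
  have heq : ∀ i : ℕ, (∑ k ∈ Finset.range i, Q ^ k) * (1 - Q) = 1 - Q ^ i := by
    intro i
    have := geom_sum_mul Q i
    calc (∑ k ∈ Finset.range i, Q ^ k) * (1 - Q)
        = -((∑ k ∈ Finset.range i, Q ^ k) * (Q - 1)) := by
          rw [← neg_sub Q 1, mul_neg]
      _ = -(Q ^ i - 1) := by rw [this]
      _ = 1 - Q ^ i := neg_sub _ _
  have h2 : Tendsto (fun i : ℕ => 1 - Q ^ i) atTop (nhds (1 : Matrix T T ℝ)) := by
    simpa using tendsto_const_nhds.sub hQlim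
  have hSinv : S * (1 - Q) = 1 := by
    refine tendsto_nhds_unique ?_ h2
    simpa only [heq] using h1
  have hinv : (1 - Q)⁻¹ = S := Matrix.inv_eq_left_inv hSinv
  -- the continuous additive map M ↦ (M * R) s y
  set φ : Matrix T T ℝ → ℝ := fun M => (M * R) s y with hφ
  have hφadd : ∀ M N : Matrix T T ℝ, φ (M + N) = φ M + φ N := by
    intro M N; simp [hφ, Matrix.add_mul]
  have hφcont : Continuous φ := by
    have : φ = fun M : Matrix T T ℝ => ∑ t, M s t * R t y := by
      funext M; simp [hφ, Matrix.mul_apply]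
    rw [this]
    exact continuous_finset_sum _ fun t _ =>
      ((continuous_id.matrix_elem s t).mul continuous_const)
  constructor
  · have : Tendsto (fun i : ℕ => φ (∑ k ∈ Finset.range i, Q ^ k)) atTop (nhds (φ S)) :=
      (hφcont.tendsto S).comp hT
    have hentry : ∀ i : ℕ,
        ((Matrix.fromBlocks (1 : Matrix A A ℝ) 0 R Q) ^ i) (Sum.inr s) (Sum.inl y) =
          φ (∑ k ∈ Finset.range i, Q ^ k) := by
      intro i; rw [aux_blockpow R Q i]; rfl
    rw [hinv]
    simpa only [← hentry] using this
  · rw [hinv]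
    have hsum : HasSum (fun k : ℕ => φ (Q ^ k)) (φ S) :=
      hS.hasSum.map (AddMonoidHom.mk' φ hφadd) hφcont
    exact hsum.tsum_eq.symm
end
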